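/- Let 𝔊 be a general gradient span algorithm, f : ℝ^N → ℝ a differentiable function, x₀ a starting point, φ(x) = Ux a linear isometry of ℝ^N (U orthogonal), g := f ∘ φ, and y₀ := φ⁻¹(x₀). Then the optimization paths x_n := 𝔊(f, x₀, n) and y_n := 𝔊(g, y₀, n) satisfy y_n = φ⁻¹(x_n) for all n ∈ ℕ. The same holds for all isometries φ(x) = Ux + b provided the algorithm is x₀-agnostic. -/

import Mathlib

open MeasureTheory ProbabilityTheory Filter
open scoped ENNReal NNReal InnerProductSpace Topology BigOperators

noncomputable section

/-- Euclidean space `ℝ^N`. -/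
abbrev EucSp (N : ℕ) : Type := EuclideanSpace ℝ (Fin N)

/-- Convergence in probability (along the dimension index `N → ∞`)
of real random variables to a deterministic constant. -/
def TendstoInProb {Ω : Type*} [MeasurableSpace Ω] (P : Measure Ω)
    (Z : ℕ → Ω → ℝ) (c : ℝ) : Prop :=
  ∀ ε : ℝ, 0 < ε → Tendsto (fun N => P {ω | ε < |Z N ω - c|}) atTop (𝓝 0)

/-- The mean function of a random function. -/
def meanRF {Ω : Type*} [MeasurableSpace Ω] (P : Measure Ω) {N : ℕ}
    (f : Ω → EucSp N → ℝ) (x : EucSp N) : ℝ :=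
  ∫ ω, f ω x ∂P

/-- The covariance function of a random function. -/
def covRF {Ω : Type*} [MeasurableSpace Ω] (P : Measure Ω) {N : ℕ}
    (f : Ω → EucSp N → ℝ) (x y : EucSp N) : ℝ :=
  ∫ ω, (f ω x - meanRF P f x) * (f ω y - meanRF P f y) ∂P

/-- Covariance of two real random variables. -/
def covRV {Ω : Type*} [MeasurableSpace Ω] (P : Measure Ω) (g h : Ω → ℝ) : ℝ :=
  ∫ ω, (g ω - ∫ ω', g ω' ∂P) * (h ω - ∫ ω', h ω' ∂P) ∂P

/-- A Gaussian random function: every finite linear combination of evaluations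
has a (possibly degenerate) Gaussian distribution. -/
def IsGaussianRF {Ω : Type*} [MeasurableSpace Ω] (P : Measure Ω) {N : ℕ}
    (f : Ω → EucSp N → ℝ) : Prop :=
  ∀ (n : ℕ) (x : Fin n → EucSp N) (c : Fin n → ℝ), ∃ (m : ℝ) (v : ℝ≥0),
    Measure.map (fun ω => ∑ i, c i * f ω (x i)) P = gaussianReal m v

/-- A (non-stationary) isotropic scaled random function:
mean `μ(‖x‖²/2)` and covariance `(1/N)·κ(‖x‖²/2, ‖y‖²/2, ⟨x,y⟩)`. -/
def IsIsotropicRF {Ω : Type*} [MeasurableSpace Ω] (P : Measure Ω) {N : ℕ}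
    (f : Ω → EucSp N → ℝ) (μ : ℝ → ℝ) (κ : ℝ → ℝ → ℝ → ℝ) : Prop :=
  (∀ x, meanRF P f x = μ (‖x‖ ^ 2 / 2)) ∧
  (∀ x y, covRF P f x y = (1 / (N : ℝ)) * κ (‖x‖ ^ 2 / 2) (‖y‖ ^ 2 / 2) ⟪x, y⟫_ℝ)

/-- A stationary isotropic scaled random function:
constant mean `μ` and covariance `(1/N)·C(‖x−y‖²/2)`. -/
def IsStationaryIsotropicRF {Ω : Type*} [MeasurableSpace Ω] (P : Measure Ω) {N : ℕ}
    (f : Ω → EucSp N → ℝ) (μ : ℝ) (C : ℝ → ℝ) : Prop :=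
  (∀ x, meanRF P f x = μ) ∧
  (∀ x y, covRF P f x y = (1 / (N : ℝ)) * C (‖x - y‖ ^ 2 / 2))

/-- A (non-stationary) isotropic kernel is valid in all dimensions if a corresponding
(non-stationary) isotropic Gaussian random function exists in every dimension. -/
def ValidInAllDimensions (μ : ℝ → ℝ) (κ : ℝ → ℝ → ℝ → ℝ) : Prop :=
  ∀ N : ℕ, ∃ (Ω' : Type) (_ : MeasurableSpace Ω') (P : Measure Ω') (f : Ω' → EucSp N → ℝ),
    IsProbabilityMeasure P ∧ IsGaussianRF P f ∧ IsIsotropicRF P f μ κ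

/-- A stationary isotropic kernel is valid in all dimensions if a corresponding
stationary isotropic Gaussian random function exists in every dimension. -/
def ValidInAllDimensionsStat (μ : ℝ) (C : ℝ → ℝ) : Prop :=
  ∀ N : ℕ, ∃ (Ω' : Type) (_ : MeasurableSpace Ω') (P : Measure Ω') (f : Ω' → EucSp N → ℝ),
    IsProbabilityMeasure P ∧ IsGaussianRF P f ∧ IsStationaryIsotropicRF P f μ C

/-- Sufficient smoothness of a (non-stationary) isotropic kernel: the partial
derivatives `κ₁₂, κ₁₃, κ₂₃, κ₃₃` exist and are continuous. -/
def KernelSufficientlySmooth (κ : ℝ → ℝ → ℝ → ℝ) : Prop :=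
  ∃ κ₁ κ₂ κ₃ κ₁₂ κ₁₃ κ₂₃ κ₃₃ : ℝ → ℝ → ℝ → ℝ,
    (∀ a b c, HasDerivAt (fun t => κ t b c) (κ₁ a b c) a) ∧
    (∀ a b c, HasDerivAt (fun t => κ a t c) (κ₂ a b c) b) ∧
    (∀ a b c, HasDerivAt (fun t => κ a b t) (κ₃ a b c) c) ∧
    (∀ a b c, HasDerivAt (fun t => κ₁ a t c) (κ₁₂ a b c) b) ∧
    (∀ a b c, HasDerivAt (fun t => κ₁ a b t) (κ₁₃ a b c) c) ∧
    (∀ a b c, HasDerivAt (fun t => κ₂ a b t) (κ₂₃ a b c) c) ∧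
    (∀ a b c, HasDerivAt (fun t => κ₃ a b t) (κ₃₃ a b c) c) ∧
    Continuous (fun p : ℝ × ℝ × ℝ => κ₁₂ p.1 p.2.1 p.2.2) ∧
    Continuous (fun p : ℝ × ℝ × ℝ => κ₁₃ p.1 p.2.1 p.2.2) ∧
    Continuous (fun p : ℝ × ℝ × ℝ => κ₂₃ p.1 p.2.1 p.2.2) ∧
    Continuous (fun p : ℝ × ℝ × ℝ => κ₃₃ p.1 p.2.1 p.2.2)

/-- Sufficient smoothness of the mean: a continuous derivative exists. -/
def MeanSufficientlySmooth (μ : ℝ → ℝ) : Prop :=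
  ∃ μ' : ℝ → ℝ, (∀ a, HasDerivAt μ (μ' a) a) ∧ Continuous μ'

/-- Strict positive definiteness of the pair `(f, ∇f)`: any vanishing variance of a
finite linear combination of values and gradient entries at distinct points forces
all coefficients to vanish. -/
def StrictPosDefPair {Ω : Type*} [MeasurableSpace Ω] (P : Measure Ω) {N : ℕ}
    (f : Ω → EucSp N → ℝ) : Prop :=
  ∀ (n : ℕ) (x : Fin n → EucSp N), Function.Injective x →
    ∀ (w : Fin n → ℝ) (u : Fin n → EucSp N),
      variance (fun ω => ∑ i, (w i * f ω (x i) + ⟪u i, gradient (f ω) (x i)⟫_ℝ)) P = 0 →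
      ∀ i, w i = 0 ∧ u i = 0

/-- The dimensionless information: values of the function along the path together with
all inner products of `x₀` and the encountered gradients. -/
abbrev InfoVec : Type := (ℕ → ℝ) × (ℕ → ℕ → ℝ)

/-- A general gradient span algorithm, given by its prefactors, which are functions
of the dimensionless information. -/
structure GSA where
  hx : ℕ → InfoVec → ℝ
  hg : ℕ → ℕ → InfoVec → ℝ

/-- The information vector `I_n` available at time `n`: function values `f(x_k)`, `k ≤ n`,
and all inner products of the vectors `x₀, ∇f(x₀), …, ∇f(x_n)` (encoded with index `0`
for `x₀` and index `k+1` for `∇f(x_k)`; entries beyond the horizon are set to `0`). -/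
def information {N : ℕ} (f : EucSp N → ℝ) (x : ℕ → EucSp N) (n : ℕ) : InfoVec :=
  (fun k => if k ≤ n then f (x k) else 0,
   fun i j =>
     (let v : ℕ → EucSp N := fun i =>
        if i = 0 then x 0 else if i - 1 ≤ n then gradient f (x (i - 1)) else 0
      ⟪v i, v j⟫_ℝ))

/-- The reduced information vector `I_n^{∖x₀}`: function values and inner products of
gradients only. -/
def redInformation {N : ℕ} (f : EucSp N → ℝ) (x : ℕ → EucSp N) (n : ℕ) : InfoVec :=
  (fun k => if k ≤ n then f (x k) else 0,
   fun k l => if k ≤ n ∧ l ≤ n then ⟪gradient f (x k), gradient f (x l)⟫_ℝ else 0)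

/-- `x` is the path produced by the gradient span algorithm `G` applied to `f` with
starting point `x₀`:  `x_{n+1} = h^{(x)}_{n+1}(I_n)·x₀ + ∑_{k ≤ n} h^{(g)}_{n+1,k}(I_n)·∇f(x_k)`. -/
def GSA.IsPath {N : ℕ} (G : GSA) (f : EucSp N → ℝ) (x0 : EucSp N) (x : ℕ → EucSp N) : Prop :=
  x 0 = x0 ∧
  ∀ n : ℕ, x (n + 1) =
    G.hx (n + 1) (information f x n) • x0 +
      ∑ k ∈ Finset.range (n + 1), G.hg (n + 1) k (information f x n) • gradient f (x k)

/-- `G` is `x₀`-agnostic: it stays in the span shifted by `x₀` (`h^{(x)} = 1`) and its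
prefactors depend only on the reduced information (no inner products with `x₀`). -/
def GSA.X0Agnostic (G : GSA) : Prop :=
  (∀ n ι, G.hx n ι = 1) ∧
  (∀ n k (ι ι' : InfoVec), ι.1 = ι'.1 →
    (∀ i j : ℕ, ι.2 (i + 1) (j + 1) = ι'.2 (i + 1) (j + 1)) → G.hg n k ι = G.hg n k ι')

/-- The family of vectors `x₀, ∇f(x₀), ∇f(x₁), …` generating the previsible vector spaces of
evaluation points. -/
def gsVecs {N : ℕ} (f : EucSp N → ℝ) (x : ℕ → EucSp N) : ℕ → EucSp N
  | 0 => x 0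
  | k + 1 => gradient f (x k)

/-- `d_n`: the dimension of the previsible vector space of evaluation points
`V_n = span{x₀, ∇f(x_k) : k < n}`. -/
def dimSpan {N : ℕ} (f : EucSp N → ℝ) (x : ℕ → EucSp N) (n : ℕ) : ℕ :=
  Module.finrank ℝ (Submodule.span ℝ (gsVecs f x '' Set.Iic n))

/-- The modified information vector `Î_n`: function values along the path together with
the inner products of the Gram–Schmidt orthonormal coordinate system with the gradients
(truncated to the relevant range). -/
def minfoAt {N : ℕ} (f : EucSp N → ℝ) (x : ℕ → EucSp N) (n : ℕ) : InfoVec :=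
  (fun k => if k ≤ n then f (x k) else 0,
   fun i k => if i < n + 2 ∧ k ≤ n then
      ⟪InnerProductSpace.gramSchmidtNormed ℝ (gsVecs f x) i, gradient f (x k)⟫_ℝ else 0)

/-- Strict positive definiteness of `(f, ∇f, (∂_{ij}f)_{i≤j}, …)` up to order `k`:
coefficients are indexed by points, by the order `l ≤ k` of differentiation and by sorted
(monotone) index tuples `i₁ ≤ … ≤ i_l`. -/
def StrictPosDefDerivs {Ω : Type*} [MeasurableSpace Ω] (P : Measure Ω) {N : ℕ}
    (f : Ω → EucSp N → ℝ) (k : ℕ) : Prop :=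
  ∀ (n : ℕ) (x : Fin n → EucSp N), Function.Injective x →
    ∀ w : (j : Fin n) → (l : Fin (k + 1)) → ((Fin (l : ℕ) → Fin N) → ℝ),
      (∀ j l idx, ¬ Monotone idx → w j l idx = 0) →
      variance (fun ω => ∑ j, ∑ l : Fin (k + 1), ∑ idx : Fin (l : ℕ) → Fin N,
        w j l idx *
          iteratedFDeriv ℝ (l : ℕ) (f ω) (x j) (fun s => EuclideanSpace.single (idx s) 1)) P
        = 0 →
      ∀ j l idx, w j l idx = 0

end


section Aux

open InnerProductSpace

variable {N : ℕ}

lemma toDual_comp_eq {g : EucSp N} (φ : EucSp N ≃ₗᵢ[ℝ] EucSp N) :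
    (InnerProductSpace.toDual ℝ (EucSp N) g).comp
      (φ.toContinuousLinearEquiv : EucSp N →L[ℝ] EucSp N)
      = InnerProductSpace.toDual ℝ (EucSp N) (φ.symm g) := by
  ext v
  simp only [ContinuousLinearMap.comp_apply, InnerProductSpace.toDual_apply_apply,
    LinearIsometryEquiv.coe_toContinuousLinearEquiv, ContinuousLinearEquiv.coe_coe]
  rw [← φ.inner_map_map (φ.symm g) v, φ.apply_symm_apply]

lemma gradient_comp_linearIsometryEquiv (f : EucSp N → ℝ) (hf : Differentiable ℝ f)
    (φ : EucSp N ≃ₗᵢ[ℝ] EucSp N) (y : EucSp N) :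
    gradient (f ∘ φ) y = φ.symm (gradient f (φ y)) := by
  have hg : HasGradientAt f (gradient f (φ y)) (φ y) := (hf (φ y)).hasGradientAt
  have hfd := hg.hasFDerivAt
  have hφ : HasFDerivAt (φ : EucSp N → EucSp N)
      (φ.toContinuousLinearEquiv : EucSp N →L[ℝ] EucSp N) y :=
    φ.toContinuousLinearEquiv.hasFDerivAt
  have hcomp := hfd.comp y hφ
  rw [toDual_comp_eq] at hcomp
  exact (hasGradientAt_iff_hasFDerivAt.mpr hcomp).gradient

lemma affine_decomp (φ : EucSp N ≃ᵃⁱ[ℝ] EucSp N) (x : EucSp N) :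
    φ x = φ.linearIsometryEquiv x + φ 0 := by
  have := φ.map_vadd 0 x
  simpa [vadd_eq_add] using this

lemma symm_linearIsometryEquiv (φ : EucSp N ≃ᵃⁱ[ℝ] EucSp N) (w : EucSp N) :
    φ.symm.linearIsometryEquiv w = φ.linearIsometryEquiv.symm w := by
  apply φ.linearIsometryEquiv.injective
  rw [φ.linearIsometryEquiv.apply_symm_apply]
  have h1 : φ.symm.linearIsometryEquiv w = φ.symm (w +ᵥ (0:EucSp N)) -ᵥ φ.symm 0 := by
    rw [← φ.symm.map_vsub]; simp
  rw [h1, φ.map_vsub, φ.apply_symm_apply, φ.apply_symm_apply]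
  simp

lemma gradient_comp_affineIsometryEquiv (f : EucSp N → ℝ) (hf : Differentiable ℝ f)
    (φ : EucSp N ≃ᵃⁱ[ℝ] EucSp N) (y : EucSp N) :
    gradient (f ∘ φ) y = φ.linearIsometryEquiv.symm (gradient f (φ y)) := by
  have hg : HasGradientAt f (gradient f (φ y)) (φ y) := (hf (φ y)).hasGradientAt
  have hfd := hg.hasFDerivAt
  have hφ : HasFDerivAt (φ : EucSp N → EucSp N)
      (φ.linearIsometryEquiv.toContinuousLinearEquiv : EucSp N →L[ℝ] EucSp N) y := by
    have h1 : (φ : EucSp N → EucSp N) = fun x => φ.linearIsometryEquiv x + φ 0 :=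
      funext fun x => affine_decomp φ x
    rw [h1]
    exact φ.linearIsometryEquiv.toContinuousLinearEquiv.hasFDerivAt.add_const _
  have hcomp := hfd.comp y hφ
  rw [toDual_comp_eq] at hcomp
  exact (hasGradientAt_iff_hasFDerivAt.mpr hcomp).gradient

end Aux

/-- Lemma: linear isometry invariance of gradient span algorithms.
If `x` is the path of a gradient span algorithm `𝔊` on `f` from `x₀` and `y` is the path of
`𝔊` on `g := f ∘ φ` from `y₀ := φ⁻¹(x₀)` for a linear isometry `φ`, then `y_n = φ⁻¹(x_n)` for
all `n`.  The same holds for every (affine) isometry `φ(x) = Ux + b` provided `𝔊` is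
`x₀`-agnostic. -/
theorem gsa_invariant_under_isometries
    {N : ℕ} (G : GSA) (f : EucSp N → ℝ) (hf : Differentiable ℝ f) :
    (∀ (φ : EucSp N ≃ₗᵢ[ℝ] EucSp N) (x0 : EucSp N) (x y : ℕ → EucSp N),
      G.IsPath f x0 x →
      G.IsPath (f ∘ φ) (φ.symm x0) y →
      ∀ n : ℕ, y n = φ.symm (x n)) ∧
    (G.X0Agnostic →
      ∀ (φ : EucSp N ≃ᵃⁱ[ℝ] EucSp N) (x0 : EucSp N) (x y : ℕ → EucSp N),
        G.IsPath f x0 x →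
        G.IsPath (f ∘ φ) (φ.symm x0) y →
        ∀ n : ℕ, y n = φ.symm (x n)) := by
  constructor
  · intro φ x0 x y hx hy n
    induction n using Nat.strong_induction_on with
    | _ n ih =>
      match n with
      | 0 => rw [hy.1, hx.1]
      | Nat.succ m =>
        have ihle : ∀ k ≤ m, y k = φ.symm (x k) := fun k hk =>
          ih k (Nat.lt_succ_of_le hk)
        have hgrad : ∀ k ≤ m, gradient (f ∘ φ) (y k) = φ.symm (gradient f (x k)) := by
          intro k hk
          rw [ihle k hk, gradient_comp_linearIsometryEquiv f hf φ, φ.apply_symm_apply]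
        have hinfo : information (f ∘ φ) y m = information f x m := by
          unfold information
          refine Prod.ext ?_ ?_
          · funext k
            by_cases hk : k ≤ m
            · simp only [hk, if_true, ihle k hk, Function.comp_apply,
                φ.apply_symm_apply]
            · simp [hk]
          · funext i j
            dsimp only
            have hv : ∀ i : ℕ,
                (if i = 0 then y 0 else
                  if i - 1 ≤ m then gradient (f ∘ φ) (y (i - 1)) else 0)
                = φ.symm (if i = 0 then x 0 else
                  if i - 1 ≤ m then gradient f (x (i - 1)) else 0) := by
              intro i
              split_ifs with h1 h2
              · exact ihle 0 (Nat.zero_le m)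
              · exact hgrad (i - 1) h2
              · simp
            rw [hv i, hv j, φ.symm.inner_map_map]
        rw [hy.2 m, hx.2 m, hinfo, map_add, _root_.map_smul, map_sum]
        refine congrArg₂ (· + ·) rfl ?_
        refine Finset.sum_congr rfl fun k hk => ?_
        rw [hgrad k (Nat.lt_succ_iff.mp (Finset.mem_range.mp hk)), _root_.map_smul]
  · intro hagn φ x0 x y hx hy n
    set L := φ.linearIsometryEquiv with hL
    have hsymm_add : ∀ a w : EucSp N, φ.symm (a + w) = φ.symm a + L.symm w := by
      intro a w
      have h := φ.symm.map_vadd a w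
      rw [add_comm a w, add_comm (φ.symm a)]
      simpa [symm_linearIsometryEquiv, vadd_eq_add, hL] using h
    induction n using Nat.strong_induction_on with
    | _ n ih =>
      match n with
      | 0 => rw [hy.1, hx.1]
      | Nat.succ m =>
        have ihle : ∀ k ≤ m, y k = φ.symm (x k) := fun k hk =>
          ih k (Nat.lt_succ_of_le hk)
        have hgrad : ∀ k ≤ m, gradient (f ∘ φ) (y k) = L.symm (gradient f (x k)) := by
          intro k hk
          rw [ihle k hk, gradient_comp_affineIsometryEquiv f hf φ, φ.apply_symm_apply]
        have hc : ∀ k, G.hg (m + 1) k (information (f ∘ φ) y m)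
            = G.hg (m + 1) k (information f x m) := by
          intro k
          apply hagn.2
          · funext k'
            unfold information
            by_cases hk' : k' ≤ m
            · simp only [hk', if_true, ihle k' hk', Function.comp_apply,
                φ.apply_symm_apply]
            · simp [hk']
          · intro i j
            unfold information
            dsimp only
            have hv : ∀ i : ℕ,
                (if i + 1 = 0 then y 0 else
                  if i + 1 - 1 ≤ m then gradient (f ∘ φ) (y (i + 1 - 1)) else 0)
                = L.symm (if i + 1 = 0 then x 0 else
                  if i + 1 - 1 ≤ m then gradient f (x (i + 1 - 1)) else 0) := by
              intro i
              simp only [Nat.succ_ne_zero, if_false, Nat.add_sub_cancel]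
              split_ifs with h1
              · exact hgrad i h1
              · simp
            rw [hv i, hv j, L.symm.inner_map_map]
        rw [hy.2 m, hx.2 m, hagn.1, hagn.1, one_smul, one_smul, hsymm_add, map_sum]
        refine congrArg₂ (· + ·) rfl ?_
        refine Finset.sum_congr rfl fun k hk => ?_
        rw [hgrad k (Nat.lt_succ_iff.mp (Finset.mem_range.mp hk)), _root_.map_smul, hc k]
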